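/- Let V be a pointed variety of universal algebras such that for every congruence C on any product A × B and all x, y ∈ A, z ∈ B, (x,0) C (y,0) implies (x,z) C (y,z). Then V admits, for some m and n, binary terms b₁,…,b_m, unary terms c₁,…,c_m, and (m+2)-ary terms p₁,…,p_n satisfying: p₁(x,y,b₁(x,y),…,b_m(x,y)) = x; p_i(y,x,b₁(x,y),…,b_m(x,y)) = p_{i+1}(x,y,b₁(x,y),…,b_m(x,y)); p_n(y,x,b₁(x,y),…,b_m(x,y)) = y; and p_i(0,0,c₁(z),…,c_m(z)) = z for all i. -/

import Mathlib

open FirstOrder Language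

universe u v w

/-- The componentwise structure on a binary product of structures. -/
instance prodStructure {L : FirstOrder.Language.{u, v}} {M N : Type*} [L.Structure M]
    [L.Structure N] : L.Structure (M × N) where
  funMap f x := (Structure.funMap f (fun i => (x i).1),
    Structure.funMap f (fun i => (x i).2))
  RelMap r x := Structure.RelMap r (fun i => (x i).1) ∧
    Structure.RelMap r (fun i => (x i).2)

/-- `M` satisfies the set of equations `E` (so `M` lies in the variety axiomatized
by `E`). -/
def SatisfiesEqs (L : FirstOrder.Language.{u, v}) (E : Set (L.Term ℕ × L.Term ℕ))
    (M : Type w) [L.Structure M] : Prop :=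
  ∀ e ∈ E, ∀ val : ℕ → M, e.1.realize val = e.2.realize val

/-- A congruence on an algebra: an equivalence relation compatible with all
operations. -/
def IsCongruence (L : FirstOrder.Language.{u, v}) (M : Type w) [L.Structure M]
    (C : M → M → Prop) : Prop :=
  Equivalence C ∧ ∀ {k : ℕ} (f : L.Functions k) (x y : Fin k → M),
    (∀ i, C (x i) (y i)) → C (Structure.funMap f x) (Structure.funMap f y)

namespace Stmt10Aux

variable {L : FirstOrder.Language.{u, v}}

lemma realize_congr_vars {α : Type*} [DecidableEq α] {M : Type*} [L.Structure M]
    (t : L.Term α) {v v' : α → M} (h : ∀ a ∈ t.varFinset, v a = v' a) :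
    t.realize v = t.realize v' := by
  induction t with
  | var a => exact h a (by simp [Term.varFinset])
  | func f ts ih =>
    simp only [Term.realize]
    congr 1
    funext i
    exact ih i (fun a ha => h a (by
      simp only [Term.varFinset, Finset.mem_biUnion, Finset.mem_univ]
      exact ⟨i, trivial, ha⟩))

lemma realize_prod {α : Type*} {A B : Type*} [L.Structure A] [L.Structure B]
    (t : L.Term α) (env : α → A × B) :
    t.realize env = (t.realize (fun a => (env a).1), t.realize (fun a => (env a).2)) := by
  induction t with
  | var a => rfl
  | func f ts ih =>
    simp only [Term.realize]
    show (Structure.funMap f _, Structure.funMap f _) = _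
    refine Prod.ext ?_ ?_ <;> · simp only []; congr 1; funext i; rw [ih i]


section Free

variable (L) (E : Set (L.Term ℕ × L.Term ℕ))

/-- Two terms are equivalent if they realize equally in every model of `E`. -/
def Eqv {α : Type*} (s t : L.Term α) : Prop :=
  ∀ (M : Type (max u v)) [L.Structure M], SatisfiesEqs L E M →
    ∀ val : α → M, s.realize val = t.realize val

def freeSetoid (α : Type*) : Setoid (L.Term α) :=
  ⟨Eqv L E, ⟨fun _ _ _ _ _ => rfl, fun h M _ hM val => (h M hM val).symm,
    fun h1 h2 M _ hM val => (h1 M hM val).trans (h2 M hM val)⟩⟩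

/-- The free algebra of the variety on generating set `α`. -/
@[reducible] def Free (α : Type*) := Quotient (freeSetoid L E α)

variable {α : Type*}

noncomputable instance : L.Structure (Free L E α) where
  funMap f x := Quotient.mk _ (Term.func f (fun i => (x i).out))
  RelMap _ _ := True

lemma eqv_func {n : ℕ} (f : L.Functions n) (ts ts' : Fin n → L.Term α)
    (h : ∀ i, Eqv L E (ts i) (ts' i)) : Eqv L E (Term.func f ts) (Term.func f ts') := by
  intro M _ hM val
  simp only [Term.realize]
  congr 1
  funext i
  exact h i M hM val

lemma free_funMap_mk {n : ℕ} (f : L.Functions n) (ts : Fin n → L.Term α) :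
    (Structure.funMap f (fun i => (Quotient.mk _ (ts i) : Free L E α))) =
      Quotient.mk _ (Term.func f ts) := by
  show Quotient.mk _ (Term.func f fun i => (Quotient.mk _ (ts i) : Free L E α).out) = _
  exact Quotient.sound (eqv_func L E f _ _ (fun i => Quotient.mk_out (s := freeSetoid L E α) (ts i)))

lemma free_realize_mk {β : Type*} (t : L.Term β) (vt : β → L.Term α) :
    t.realize (fun b => (Quotient.mk _ (vt b) : Free L E α)) =
      Quotient.mk _ (t.subst vt) := by
  induction t with
  | var a => rfl
  | func f ts ih =>
    simp only [Term.realize]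
    rw [show (fun i => Term.realize (fun b => (Quotient.mk _ (vt b) : Free L E α)) (ts i))
        = fun i => Quotient.mk _ ((ts i).subst vt) from funext ih]
    rw [free_funMap_mk]
    rfl

lemma free_satisfies : SatisfiesEqs L E (Free L E α) := by
  intro e he val
  have hval : ∀ n, val n = Quotient.mk _ (val n).out := fun n => (Quotient.out_eq _).symm
  rw [show val = fun n => Quotient.mk _ (val n).out from funext hval]
  rw [free_realize_mk, free_realize_mk]
  refine Quotient.sound ?_
  intro M _ hM valM
  rw [Term.realize_subst, Term.realize_subst]
  exact hM e he _

end Free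

section Transfer

variable (L) {M : Type w} [L.Structure M]

/-- Quotient of the term algebra by realize-equality at a fixed valuation. -/
def valSetoid {k : ℕ} (val : Fin k → M) : Setoid (L.Term (Fin k)) :=
  ⟨fun s t => s.realize val = t.realize val,
   ⟨fun _ => rfl, Eq.symm, Eq.trans⟩⟩

@[reducible] def ValQuot {k : ℕ} (val : Fin k → M) := Quotient (valSetoid L val)

variable {k : ℕ} (val : Fin k → M)

noncomputable instance : L.Structure (ValQuot L val) where
  funMap f x := Quotient.mk _ (Term.func f (fun i => (x i).out))
  RelMap _ _ := True

lemma valQuot_funMap_mk {n : ℕ} (f : L.Functions n) (ts : Fin n → L.Term (Fin k)) :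
    (Structure.funMap f (fun i => (Quotient.mk _ (ts i) : ValQuot L val))) =
      Quotient.mk _ (Term.func f ts) := by
  show Quotient.mk _ (Term.func f fun i => (Quotient.mk _ (ts i) : ValQuot L val).out) = _
  refine Quotient.sound ?_
  show Term.realize val _ = Term.realize val _
  simp only [Term.realize]
  congr 1
  funext i
  exact Quotient.mk_out (s := valSetoid L val) (ts i)

lemma valQuot_realize_mk {β : Type*} (t : L.Term β) (vt : β → L.Term (Fin k)) :
    t.realize (fun b => (Quotient.mk _ (vt b) : ValQuot L val)) =
      Quotient.mk _ (t.subst vt) := by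
  induction t with
  | var a => rfl
  | func f ts ih =>
    simp only [Term.realize]
    rw [show (fun i => Term.realize (fun b => (Quotient.mk _ (vt b) : ValQuot L val)) (ts i))
        = fun i => Quotient.mk _ ((ts i).subst vt) from funext ih]
    rw [valQuot_funMap_mk]
    rfl

lemma valQuot_satisfies {E : Set (L.Term ℕ × L.Term ℕ)} (hM : SatisfiesEqs L E M) :
    SatisfiesEqs L E (ValQuot L val) := by
  intro e he v
  have hv : ∀ n, v n = Quotient.mk _ (v n).out := fun n => (Quotient.out_eq _).symm
  rw [show v = fun n => Quotient.mk _ (v n).out from funext hv]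
  rw [valQuot_realize_mk, valQuot_realize_mk]
  refine Quotient.sound ?_
  show Term.realize val _ = Term.realize val _
  rw [Term.realize_subst, Term.realize_subst]
  exact hM e he _

/-- `ULift` structure. -/
instance uliftStructure {N : Type*} [L.Structure N] : L.Structure (ULift.{u'} N) where
  funMap f x := ⟨Structure.funMap f (fun i => (x i).down)⟩
  RelMap r x := Structure.RelMap r (fun i => (x i).down)

lemma realize_ulift {N : Type*} [L.Structure N] {β : Type*} (t : L.Term β)
    (env : β → ULift.{u'} N) :
    t.realize env = ⟨t.realize (fun b => (env b).down)⟩ := by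
  induction t with
  | var a => rfl
  | func f ts ih =>
    simp only [Term.realize]
    show ULift.up _ = ULift.up _
    congr 1
    congr 1
    funext i
    exact congrArg ULift.down (ih i)

lemma ulift_satisfies {N : Type*} [L.Structure N] {E : Set (L.Term ℕ × L.Term ℕ)}
    (hN : SatisfiesEqs L E N) : SatisfiesEqs L E (ULift.{u'} N) := by
  intro e he v
  rw [realize_ulift, realize_ulift, hN e he]

/-- Transfer: `Eqv` (quantifying over models in `Type (max u v)`) implies realize
equality in models of every universe. -/
lemma eqv_realize {E : Set (L.Term ℕ × L.Term ℕ)} {s t : L.Term (Fin k)}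
    (h : Eqv L E s t) (hM : SatisfiesEqs L E M) :
    s.realize val = t.realize val := by
  have key := h (ULift.{max u v} (ValQuot L val)) (ulift_satisfies L (valQuot_satisfies L val hM))
    (fun j => ⟨Quotient.mk _ (Term.var j)⟩)
  rw [realize_ulift, realize_ulift] at key
  have key2 : Term.realize (fun b => (Quotient.mk _ (Term.var b) : ValQuot L val)) s
      = Term.realize (fun b => (Quotient.mk _ (Term.var b) : ValQuot L val)) t :=
    congrArg ULift.down key
  rw [valQuot_realize_mk, valQuot_realize_mk] at key2
  have key3 : Term.realize val (s.subst Term.var) = Term.realize val (t.subst Term.var) :=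
    Quotient.exact key2
  rw [Term.realize_subst, Term.realize_subst] at key3
  exact key3

end Transfer


lemma subst_var' {α : Type*} (T : L.Term α) : T.subst Term.var = T := by
  induction T with
  | var a => rfl
  | func f ts ih =>
    show Term.func f (fun i => (ts i).subst Term.var) = _
    congr 1
    funext i
    exact ih i

section Cong

variable (L) {G : Type*} [L.Structure G] (u v : G)

/-- update a valuation at position 0. -/
def upd (w : G) (e : ℕ → G) : ℕ → G := fun n => Nat.casesOn n w e

/-- One step of the principal congruence generated by `(u, v)`. -/
def Step : G → G → Prop := fun a b =>
  ∃ (t : L.Term ℕ) (e : ℕ → G),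
    (a = t.realize (upd u e) ∧ b = t.realize (upd v e)) ∨
    (a = t.realize (upd v e) ∧ b = t.realize (upd u e))

lemma step_refl (a : G) : Step L u v a a :=
  ⟨Term.var 1, fun _ => a, Or.inl ⟨rfl, rfl⟩⟩

lemma step_symm : Symmetric (Step L u v) := by
  rintro a b ⟨t, e, h | h⟩
  · exact ⟨t, e, Or.inr ⟨h.2, h.1⟩⟩
  · exact ⟨t, e, Or.inl ⟨h.2, h.1⟩⟩

lemma step_uv : Step L u v u v := ⟨Term.var 0, fun _ => u, Or.inl ⟨rfl, rfl⟩⟩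

lemma step_funMap {k : ℕ} (f : L.Functions k) (x : Fin k → G) (i : Fin k) {a b : G}
    (h : Step L u v a b) :
    Step L u v (Structure.funMap f (Function.update x i a))
      (Structure.funMap f (Function.update x i b)) := by
  classical
  obtain ⟨t, e, ho⟩ := h
  set ρ : ℕ → ℕ := fun n => Nat.casesOn n 0 (fun m => 2 * m + 2) with hρ
  set xv : ℕ → G := fun j => if hj : j < k then x ⟨j, hj⟩ else a with hxv
  set e' : ℕ → G := fun n => if n % 2 = 0 then xv (n / 2) else e ((n - 1) / 2) with he'
  set t' : L.Term ℕ :=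
    Term.func f (fun j => if j = i then t.relabel ρ else Term.var (2 * (j : ℕ) + 1)) with ht'
  have key : ∀ w' : G, t'.realize (upd w' e')
      = Structure.funMap f (Function.update x i (t.realize (upd w' e))) := by
    intro w'
    show Structure.funMap f _ = _
    congr 1
    funext j
    by_cases hji : j = i
    · subst hji
      simp only [eq_self_iff_true, if_true, Function.update_self]
      rw [Term.realize_relabel]
      congr 1
      funext n
      cases n with
      | zero => rfl
      | succ m =>
        show upd w' e' (2 * m + 2) = e m
        show e' (2 * m + 1) = e m
        rw [he']
        simp only []
        rw [if_neg (by omega)]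
        congr 1
        omega
    · simp only [if_neg hji, Function.update_of_ne hji]
      show upd w' e' (2 * (j : ℕ) + 1) = x j
      show e' (2 * (j : ℕ)) = x j
      rw [he']
      simp only []
      rw [if_pos (by omega)]
      rw [hxv]
      simp only []
      rw [Nat.mul_div_cancel_left _ (by norm_num : 0 < 2)]
      rw [dif_pos j.isLt]
  rcases ho with ⟨ha, hb⟩ | ⟨ha, hb⟩
  · exact ⟨t', e', Or.inl ⟨by rw [key, ← ha], by rw [key, ← hb]⟩⟩
  · exact ⟨t', e', Or.inr ⟨by rw [key, ← ha], by rw [key, ← hb]⟩⟩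

lemma rtg_funMap_update {k : ℕ} (f : L.Functions k) (x : Fin k → G) (i : Fin k) {a b : G}
    (h : Relation.ReflTransGen (Step L u v) a b) :
    Relation.ReflTransGen (Step L u v) (Structure.funMap f (Function.update x i a))
      (Structure.funMap f (Function.update x i b)) := by
  induction h with
  | refl => exact Relation.ReflTransGen.refl
  | tail _ hstep ih =>
    exact Relation.ReflTransGen.tail ih (step_funMap L u v f x i hstep)

lemma rtg_funMap {k : ℕ} (f : L.Functions k) (x y : Fin k → G)
    (h : ∀ i, Relation.ReflTransGen (Step L u v) (x i) (y i)) :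
    Relation.ReflTransGen (Step L u v) (Structure.funMap f x) (Structure.funMap f y) := by
  classical
  set mix : ℕ → Fin k → G := fun l j => if (j : ℕ) < l then y j else x j with hmix
  have main : ∀ l, l ≤ k → Relation.ReflTransGen (Step L u v)
      (Structure.funMap f x) (Structure.funMap f (mix l)) := by
    intro l
    induction l with
    | zero =>
      intro _
      have : mix 0 = x := by funext j; simp [hmix]
      rw [this]
    | succ l ih =>
      intro hl
      have hlk : l < k := hl
      have h1 : mix l = Function.update (mix l) ⟨l, hlk⟩ (x ⟨l, hlk⟩) := by
        funext j
        rcases eq_or_ne j ⟨l, hlk⟩ with rfl | hj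
        · rw [Function.update_self]; simp [hmix]
        · rw [Function.update_of_ne hj]
      have h2 : mix (l + 1) = Function.update (mix l) ⟨l, hlk⟩ (y ⟨l, hlk⟩) := by
        funext j
        rcases eq_or_ne j ⟨l, hlk⟩ with rfl | hj
        · rw [Function.update_self]; simp [hmix]
        · rw [Function.update_of_ne hj]
          have hj' : (j : ℕ) ≠ l := fun hc => hj (Fin.ext hc)
          simp only [hmix]
          rcases Nat.lt_or_ge (j : ℕ) l with h' | h'
          · rw [if_pos h', if_pos (by omega)]
          · rw [if_neg (by omega), if_neg (by omega)]
      refine Relation.ReflTransGen.trans (ih (le_of_lt hlk)) ?_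
      rw [h2]
      conv_lhs => rw [h1]
      exact rtg_funMap_update L u v f (mix l) ⟨l, hlk⟩ (h ⟨l, hlk⟩)
  have hk : mix k = y := by
    funext j
    simp [hmix, j.isLt]
  have := main k le_rfl
  rwa [hk] at this

lemma rtg_congruence : IsCongruence L G (Relation.ReflTransGen (Step L u v)) := by
  constructor
  · exact ⟨fun _ => Relation.ReflTransGen.refl,
      fun h => (@Relation.ReflTransGen.stdSymm _ _ ⟨fun _ _ h' => step_symm L u v h'⟩).symm _ _ h,
      fun h h' => Relation.ReflTransGen.trans h h'⟩
  · intro k f x y h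
    exact rtg_funMap L u v f x y h

lemma rtg_chain {a b : G} (h : Relation.ReflTransGen (Step L u v) a b) :
    ∃ (N : ℕ), 0 < N ∧ ∃ w : ℕ → G, w 0 = a ∧ w N = b ∧
      ∀ i < N, Step L u v (w i) (w (i + 1)) := by
  classical
  have main : ∃ (N : ℕ) (w : ℕ → G), w 0 = a ∧ w N = b ∧
      ∀ i < N, Step L u v (w i) (w (i + 1)) := by
    induction h with
    | refl => exact ⟨0, fun _ => a, rfl, rfl, fun i hi => absurd hi (by omega)⟩
    | @tail b' c _ hstep ih =>
      obtain ⟨N, w, hw0, hwN, hs⟩ := ih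
      refine ⟨N + 1, fun i => if i < N + 1 then w i else c, by simp [hw0], by simp, ?_⟩
      intro i hi
      rcases Nat.lt_or_ge i N with h' | h'
      · simpa [Nat.lt_succ_of_lt h', Nat.succ_lt_succ h'] using hs i h'
      · have hiN : i = N := by omega
        subst hiN
        simpa [Nat.lt_succ_self, hwN] using hstep
  obtain ⟨N, w, hw0, hwN, hs⟩ := main
  rcases Nat.eq_zero_or_pos N with rfl | hN
  · exact ⟨1, one_pos, fun _ => a, rfl, by rw [← hwN, hw0], fun i _ => step_refl L u v a⟩
  · exact ⟨N, hN, w, hw0, hwN, hs⟩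

end Cong


section Helpers

variable (L)

lemma eqv_of_subst_up {E : Set (L.Term ℕ × L.Term ℕ)} {k : ℕ} {s t : L.Term (Fin k)}
    (h : Eqv L E (s.subst fun j => Term.var (ULift.up.{v'} j))
      (t.subst fun j => Term.var (ULift.up.{v'} j))) : Eqv L E s t := by
  intro M _ hM val
  have key := h M hM (fun a => val a.down)
  rwa [Term.realize_subst, Term.realize_subst] at key

lemma realize_zterm {M' : Type*} [L.Structure M'] (z : L.Constants) {r : ℕ}
    (val : Fin r → M') :
    (Constants.term z : L.Term (Fin r)).realize val
      = Structure.funMap (z : L.Functions 0) finZeroElim := by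
  rw [Term.realize_constants]
  show Structure.funMap z default = _
  exact congrArg (Structure.funMap z) (funext fun i => i.elim0)


lemma realize_comp_cons {M' : Type*} [L.Structure M'] {m' r : ℕ}
    (t0 t1 : L.Term (Fin r)) (g : Fin m' → L.Term (Fin r)) (val : Fin r → M') :
    (fun s : Fin (m' + 2) =>
      ((Fin.cons t0 (Fin.cons t1 g) : Fin (m' + 2) → L.Term (Fin r)) s).realize val)
    = Fin.cons (t0.realize val)
        (Fin.cons (t1.realize val) (fun j => (g j).realize val)) := by
  show (fun τ : L.Term (Fin r) => τ.realize val) ∘ _ = _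
  rw [Fin.comp_cons, Fin.comp_cons]
  rfl

end Helpers

lemma cons_cons_zero {T : Sort*} {m' : ℕ} (x0 x1 : T) (g : Fin m' → T) (h : 0 < m' + 2) :
    (Fin.cons x0 (Fin.cons x1 g) : Fin (m' + 2) → T) ⟨0, h⟩ = x0 := by
  rw [Fin.mk_zero, Fin.cons_zero]

lemma cons_cons_one {T : Sort*} {m' : ℕ} (x0 x1 : T) (g : Fin m' → T) (h : 1 < m' + 2) :
    (Fin.cons x0 (Fin.cons x1 g) : Fin (m' + 2) → T) ⟨1, h⟩ = x1 := by
  have hh : (⟨1, h⟩ : Fin (m' + 2)) = (⟨0, by omega⟩ : Fin (m' + 1)).succ := rfl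
  rw [hh, Fin.cons_succ]
  have h0 : (⟨0, by omega⟩ : Fin (m' + 1)) = 0 := Fin.mk_zero
  rw [h0, Fin.cons_zero]

lemma cons_cons_two {T : Sort*} {m' : ℕ} (x0 x1 : T) (g : Fin m' → T) (j : ℕ) (hj : j < m')
    (hj2 : j + 2 < m' + 2) :
    (Fin.cons x0 (Fin.cons x1 g) : Fin (m' + 2) → T) ⟨j + 2, hj2⟩ = g ⟨j, hj⟩ := by
  have h : (⟨j + 2, hj2⟩ : Fin (m' + 2)) = ((⟨j, hj⟩ : Fin m').succ).succ := rfl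
  rw [h, Fin.cons_succ, Fin.cons_succ]

end Stmt10Aux

open Stmt10Aux in
/-- if in the pointed variety of `L`-algebras axiomatized by `E`
(with unique constant `z`) every congruence `C` on a binary product satisfies
`(x,0) C (y,0) → (x,a) C (y,a)`, then the variety admits the Mal'tsev terms
`bᵢ`, `cᵢ`, `pᵢ` of Theorem 2.8. -/
theorem stmt10 (L : FirstOrder.Language.{u, v}) (z : L.Constants)
    (E : Set (L.Term ℕ × L.Term ℕ))
    (H : ∀ (A B : Type (max u v)) [L.Structure A] [L.Structure B],
      SatisfiesEqs L E A → SatisfiesEqs L E B →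
      ∀ C : A × B → A × B → Prop, IsCongruence L (A × B) C →
      ∀ (x y : A) (a : B),
        C (x, Structure.funMap (z : L.Functions 0) finZeroElim)
          (y, Structure.funMap (z : L.Functions 0) finZeroElim) →
        C (x, a) (y, a)) :
    ∃ (m n : ℕ) (hn : 0 < n) (b : Fin m → L.Term (Fin 2))
      (c : Fin m → L.Term (Fin 1)) (p : Fin n → L.Term (Fin (m + 2))),
      ∀ (M : Type w) [L.Structure M], SatisfiesEqs L E M →
        (∀ x y : M, (p ⟨0, hn⟩).realize
            (Fin.cons x (Fin.cons y (fun j => (b j).realize ![x, y]))) = x) ∧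
        (∀ (i : Fin n) (h : (i : ℕ) + 1 < n) (x y : M),
          (p i).realize (Fin.cons y (Fin.cons x (fun j => (b j).realize ![x, y]))) =
          (p ⟨(i : ℕ) + 1, h⟩).realize
            (Fin.cons x (Fin.cons y (fun j => (b j).realize ![x, y])))) ∧
        (∀ x y : M, (p ⟨n - 1, Nat.sub_lt hn one_pos⟩).realize
            (Fin.cons y (Fin.cons x (fun j => (b j).realize ![x, y]))) = y) ∧
        (∀ (i : Fin n) (a : M),
          (p i).realize
            (Fin.cons (Structure.funMap (z : L.Functions 0) finZeroElim)
              (Fin.cons (Structure.funMap (z : L.Functions 0) finZeroElim)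
                (fun j => (c j).realize ![a]))) = a) := by
  classical
  set A : Type (max u v) := Free L E (ULift.{v} (Fin 2)) with hA_def
  set B : Type (max u v) := Free L E (ULift.{v} (Fin 1)) with hB_def
  set X : A := Quotient.mk _ (Term.var (ULift.up 0)) with hX_def
  set Y : A := Quotient.mk _ (Term.var (ULift.up 1)) with hY_def
  set ZB : B := Quotient.mk _ (Term.var (ULift.up 0)) with hZB_def
  set OB : B := Structure.funMap (z : L.Functions 0) finZeroElim with hOB_def
  set u0 : A × B := (X, OB) with hu0_def
  set v0 : A × B := (Y, OB) with hv0_def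
  have hA : SatisfiesEqs L E A := free_satisfies L E
  have hB : SatisfiesEqs L E B := free_satisfies L E
  have hC : IsCongruence L (A × B) (Relation.ReflTransGen (Step L u0 v0)) :=
    rtg_congruence L u0 v0
  have hCuv : Relation.ReflTransGen (Step L u0 v0) u0 v0 :=
    Relation.ReflTransGen.single (step_uv L u0 v0)
  have hXY : Relation.ReflTransGen (Step L u0 v0) (X, ZB) (Y, ZB) :=
    H A B hA hB _ hC X Y ZB hCuv
  obtain ⟨N, hNpos, w, hw0, hwN, hstep⟩ := rtg_chain L u0 v0 hXY
  have hstep' : ∀ i : Fin N, ∃ (t : L.Term ℕ) (e : ℕ → A × B) (o : Bool),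
      w (i : ℕ) = t.realize (upd (if o then u0 else v0) e) ∧
      w ((i : ℕ) + 1) = t.realize (upd (if o then v0 else u0) e) := by
    intro i
    obtain ⟨t, e, h | h⟩ := hstep (i : ℕ) i.isLt
    · exact ⟨t, e, true, by simpa using h.1, by simpa using h.2⟩
    · exact ⟨t, e, false, by simpa using h.1, by simpa using h.2⟩
  choose t e o h1 h2 using hstep'
  set K : ℕ := (Finset.univ.sup (fun i : Fin N => (t i).varFinset.sup id)) + 1 with hK_def
  have hKpos : 0 < K := Nat.succ_pos _
  have hK : ∀ (i : Fin N) (a : ℕ), a ∈ (t i).varFinset → a < K := by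
    intro i a ha
    have h1' : a ≤ (t i).varFinset.sup id := Finset.le_sup (f := id) ha
    have h2' : (t i).varFinset.sup id
        ≤ Finset.univ.sup (fun i : Fin N => (t i).varFinset.sup id) :=
      Finset.le_sup (f := fun i : Fin N => (t i).varFinset.sup id) (Finset.mem_univ i)
    omega
  set m : ℕ := N * K with hm_def
  have hmlt : ∀ (i : Fin N) (k' : ℕ), k' < K → (i : ℕ) * K + k' < m := by
    intro i k' hk'
    have hi : (i : ℕ) + 1 ≤ N := i.isLt
    have h3 : ((i : ℕ) + 1) * K ≤ N * K := Nat.mul_le_mul_right K hi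
    have h4 : (i : ℕ) * K + K = ((i : ℕ) + 1) * K := by ring
    omega
  have hdiv : ∀ s : Fin m, (s : ℕ) / K < N := by
    intro s
    have hs : (s : ℕ) < N * K := lt_of_lt_of_le s.isLt (le_of_eq hm_def)
    exact Nat.div_lt_of_lt_mul (by rwa [Nat.mul_comm] at hs)
  set β : Fin N → ℕ → L.Term (ULift.{v} (Fin 2)) := fun i k' => ((e i k').1).out with hβ_def
  set γ : Fin N → ℕ → L.Term (ULift.{v} (Fin 1)) := fun i k' => ((e i k').2).out with hγ_def
  set b : Fin m → L.Term (Fin 2) :=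
    fun s => (β ⟨(s : ℕ) / K, hdiv s⟩ ((s : ℕ) % K)).relabel (fun a => a.down) with hb_def
  set c : Fin m → L.Term (Fin 1) :=
    fun s => (γ ⟨(s : ℕ) / K, hdiv s⟩ ((s : ℕ) % K)).relabel (fun a => a.down) with hc_def
  have hslot : ∀ (i : Fin N) (k' : ℕ), k' < K → (i : ℕ) * K + k' + 2 < m + 2 := by
    intro i k' hk'
    have := hmlt i k' hk'
    omega
  set ρ : Fin N → ℕ → Fin (m + 2) := fun i n =>
    Nat.casesOn n (if o i then (⟨0, by omega⟩ : Fin (m + 2)) else ⟨1, by omega⟩)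
      (fun k' => if h : k' < K then ⟨(i : ℕ) * K + k' + 2, hslot i k' h⟩
        else ⟨0, by omega⟩) with hρ_def
  set p : Fin N → L.Term (Fin (m + 2)) := fun i => (t i).relabel (ρ i) with hp_def
  set genA : Fin 2 → A := fun j => Quotient.mk _ (Term.var (ULift.up j)) with hgenA_def
  set genB : Fin 1 → B := fun j => Quotient.mk _ (Term.var (ULift.up j)) with hgenB_def
  set σ1 : Fin (m + 2) → L.Term (Fin 2) :=
    Fin.cons (Term.var 0) (Fin.cons (Term.var 1) b) with hσ1_def
  set σ2 : Fin (m + 2) → L.Term (Fin 2) :=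
    Fin.cons (Term.var 1) (Fin.cons (Term.var 0) b) with hσ2_def
  set σ3 : Fin (m + 2) → L.Term (Fin 1) :=
    Fin.cons (Constants.term z) (Fin.cons (Constants.term z) c) with hσ3_def
  -- realization of the parameter terms at the generators
  have hbA : ∀ (i : Fin N) (k' : ℕ) (hk' : k' < K),
      (b ⟨(i : ℕ) * K + k', hmlt i k' hk'⟩).realize genA = (e i k').1 := by
    intro i k' hk'
    have hd : ((i : ℕ) * K + k') / K = (i : ℕ) := by
      rw [Nat.add_comm, Nat.add_mul_div_right _ _ hKpos, Nat.div_eq_of_lt hk']; omega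
    have hm' : ((i : ℕ) * K + k') % K = k' := by
      rw [Nat.add_comm, Nat.add_mul_mod_self_right, Nat.mod_eq_of_lt hk']
    rw [hb_def]
    simp only []
    have hidx : (⟨((⟨(i : ℕ) * K + k', hmlt i k' hk'⟩ : Fin m) : ℕ) / K,
        hdiv ⟨(i : ℕ) * K + k', hmlt i k' hk'⟩⟩ : Fin N) = i := Fin.ext hd
    rw [hidx]
    have hmod : ((⟨(i : ℕ) * K + k', hmlt i k' hk'⟩ : Fin m) : ℕ) % K = k' := hm'
    rw [hmod]
    rw [Term.realize_relabel]
    calc Term.realize (genA ∘ fun a : ULift.{v} (Fin 2) => a.down) (β i k')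
        = Term.realize (fun a : ULift.{v} (Fin 2) =>
            (Quotient.mk _ (Term.var a) : A)) (β i k') := rfl
      _ = Quotient.mk _ ((β i k').subst Term.var) := free_realize_mk L E _ _
      _ = Quotient.mk _ (β i k') := by rw [subst_var']
      _ = (e i k').1 := by rw [hβ_def]; exact Quotient.out_eq _
  have hcB : ∀ (i : Fin N) (k' : ℕ) (hk' : k' < K),
      (c ⟨(i : ℕ) * K + k', hmlt i k' hk'⟩).realize genB = (e i k').2 := by
    intro i k' hk'
    have hd : ((i : ℕ) * K + k') / K = (i : ℕ) := by
      rw [Nat.add_comm, Nat.add_mul_div_right _ _ hKpos, Nat.div_eq_of_lt hk']; omega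
    have hm' : ((i : ℕ) * K + k') % K = k' := by
      rw [Nat.add_comm, Nat.add_mul_mod_self_right, Nat.mod_eq_of_lt hk']
    rw [hc_def]
    simp only []
    have hidx : (⟨((⟨(i : ℕ) * K + k', hmlt i k' hk'⟩ : Fin m) : ℕ) / K,
        hdiv ⟨(i : ℕ) * K + k', hmlt i k' hk'⟩⟩ : Fin N) = i := Fin.ext hd
    rw [hidx]
    have hmod : ((⟨(i : ℕ) * K + k', hmlt i k' hk'⟩ : Fin m) : ℕ) % K = k' := hm'
    rw [hmod]
    rw [Term.realize_relabel]
    calc Term.realize (genB ∘ fun a : ULift.{v} (Fin 1) => a.down) (γ i k')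
        = Term.realize (fun a : ULift.{v} (Fin 1) =>
            (Quotient.mk _ (Term.var a) : B)) (γ i k') := rfl
      _ = Quotient.mk _ ((γ i k').subst Term.var) := free_realize_mk L E _ _
      _ = Quotient.mk _ (γ i k') := by rw [subst_var']
      _ = (e i k').2 := by rw [hγ_def]; exact Quotient.out_eq _
  -- the central computations
  have P1 : ∀ i : Fin N, ((p i).subst σ1).realize genA = (w (i : ℕ)).1 := by
    intro i
    have hw : (w (i : ℕ)).1
        = (t i).realize (fun n => ((upd (if o i then u0 else v0) (e i)) n).1) := by
      rw [h1 i, realize_prod]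
    rw [Term.realize_subst, hw, hp_def]
    simp only []
    rw [Term.realize_relabel]
    apply realize_congr_vars
    intro a ha
    cases a with
    | zero =>
      show (σ1 (ρ i 0)).realize genA = (if o i then u0 else v0).1
      cases ho : o i with
      | true =>
        have hρ0 : ρ i 0 = ⟨0, by omega⟩ := by rw [hρ_def]; simp [ho]
        rw [hρ0, hσ1_def, cons_cons_zero]
        simp [ho, hu0_def]
        rfl
      | false =>
        have hρ0 : ρ i 0 = ⟨1, by omega⟩ := by rw [hρ_def]; simp [ho]
        rw [hρ0, hσ1_def, cons_cons_one]
        simp [ho, hv0_def]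
        rfl
    | succ k' =>
      have hk' : k' < K := by have := hK i (k' + 1) ha; omega
      have hρs : ρ i (k' + 1) = ⟨(i : ℕ) * K + k' + 2, hslot i k' hk'⟩ := by
        rw [hρ_def]; simp only []; rw [dif_pos hk']
      show (σ1 (ρ i (k' + 1))).realize genA = (upd (if o i then u0 else v0) (e i) (k' + 1)).1
      rw [hρs, hσ1_def, cons_cons_two _ _ _ _ (hmlt i k' hk'), hbA i k' hk']
      rfl
  have P2 : ∀ i : Fin N, ((p i).subst σ2).realize genA = (w ((i : ℕ) + 1)).1 := by
    intro i
    have hw : (w ((i : ℕ) + 1)).1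
        = (t i).realize (fun n => ((upd (if o i then v0 else u0) (e i)) n).1) := by
      rw [h2 i, realize_prod]
    rw [Term.realize_subst, hw, hp_def]
    simp only []
    rw [Term.realize_relabel]
    apply realize_congr_vars
    intro a ha
    cases a with
    | zero =>
      show (σ2 (ρ i 0)).realize genA = (if o i then v0 else u0).1
      cases ho : o i with
      | true =>
        have hρ0 : ρ i 0 = ⟨0, by omega⟩ := by rw [hρ_def]; simp [ho]
        rw [hρ0, hσ2_def, cons_cons_zero]
        simp [ho, hv0_def]
        rfl
      | false =>
        have hρ0 : ρ i 0 = ⟨1, by omega⟩ := by rw [hρ_def]; simp [ho]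
        rw [hρ0, hσ2_def, cons_cons_one]
        simp [ho, hu0_def]
        rfl
    | succ k' =>
      have hk' : k' < K := by have := hK i (k' + 1) ha; omega
      have hρs : ρ i (k' + 1) = ⟨(i : ℕ) * K + k' + 2, hslot i k' hk'⟩ := by
        rw [hρ_def]; simp only []; rw [dif_pos hk']
      show (σ2 (ρ i (k' + 1))).realize genA = (upd (if o i then v0 else u0) (e i) (k' + 1)).1
      rw [hρs, hσ2_def, cons_cons_two _ _ _ _ (hmlt i k' hk'), hbA i k' hk']
      rfl
  have PB : ∀ i : Fin N, ((p i).subst σ3).realize genB = (w (i : ℕ)).2 := by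
    intro i
    have hw : (w (i : ℕ)).2
        = (t i).realize (fun n => ((upd (if o i then u0 else v0) (e i)) n).2) := by
      rw [h1 i, realize_prod]
    rw [Term.realize_subst, hw, hp_def]
    simp only []
    rw [Term.realize_relabel]
    apply realize_congr_vars
    intro a ha
    cases a with
    | zero =>
      show (σ3 (ρ i 0)).realize genB = (if o i then u0 else v0).2
      cases ho : o i with
      | true =>
        have hρ0 : ρ i 0 = ⟨0, by omega⟩ := by rw [hρ_def]; simp [ho]
        rw [hρ0, hσ3_def, cons_cons_zero, realize_zterm]
        simp [ho, hu0_def, hOB_def]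
      | false =>
        have hρ0 : ρ i 0 = ⟨1, by omega⟩ := by rw [hρ_def]; simp [ho]
        rw [hρ0, hσ3_def, cons_cons_one, realize_zterm]
        simp [ho, hv0_def, hOB_def]
    | succ k' =>
      have hk' : k' < K := by have := hK i (k' + 1) ha; omega
      have hρs : ρ i (k' + 1) = ⟨(i : ℕ) * K + k' + 2, hslot i k' hk'⟩ := by
        rw [hρ_def]; simp only []; rw [dif_pos hk']
      show (σ3 (ρ i (k' + 1))).realize genB = (upd (if o i then u0 else v0) (e i) (k' + 1)).2
      rw [hρs, hσ3_def, cons_cons_two _ _ _ _ (hmlt i k' hk'), hcB i k' hk']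
      rfl
  -- the second component of the chain is constantly Z
  have hsec : ∀ i : ℕ, i ≤ N → (w i).2 = ZB := by
    intro i
    induction i with
    | zero => intro _; rw [hw0]
    | succ i ih =>
      intro hi
      have hiN : i < N := hi
      have hstepi : (w (i + 1)).2 = (w i).2 := by
        have e1 := h1 ⟨i, hiN⟩
        have e2 := h2 ⟨i, hiN⟩
        simp only [Fin.val_mk] at e1 e2
        rw [e1, e2, realize_prod, realize_prod]
        show Term.realize _ (t ⟨i, hiN⟩) = Term.realize _ (t ⟨i, hiN⟩)
        congr 1
        funext n
        cases n with
        | zero => cases o ⟨i, hiN⟩ <;> rfl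
        | succ k' => rfl
      rw [hstepi]
      exact ih (le_of_lt hiN)
  -- conversion to Eqv
  have toEqv2 : ∀ {s t' : L.Term (Fin 2)},
      s.realize genA = t'.realize genA → Eqv L E s t' := by
    intro s t' hst
    refine eqv_of_subst_up L ?_
    have hq : Quotient.mk (freeSetoid L E (ULift.{v} (Fin 2)))
          (s.subst fun j => Term.var (ULift.up j))
        = Quotient.mk (freeSetoid L E (ULift.{v} (Fin 2)))
          (t'.subst fun j => Term.var (ULift.up j)) := by
      rw [← free_realize_mk, ← free_realize_mk]
      exact hst
    exact Quotient.exact hq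
  have toEqv1 : ∀ {s t' : L.Term (Fin 1)},
      s.realize genB = t'.realize genB → Eqv L E s t' := by
    intro s t' hst
    refine eqv_of_subst_up L ?_
    have hq : Quotient.mk (freeSetoid L E (ULift.{v} (Fin 1)))
          (s.subst fun j => Term.var (ULift.up j))
        = Quotient.mk (freeSetoid L E (ULift.{v} (Fin 1)))
          (t'.subst fun j => Term.var (ULift.up j)) := by
      rw [← free_realize_mk, ← free_realize_mk]
      exact hst
    exact Quotient.exact hq
  refine ⟨m, N, hNpos, b, c, p, ?_⟩
  intro M _ hM
  refine ⟨?_, ?_, ?_, ?_⟩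
  · -- first equation
    intro x y
    have hEqv : Eqv L E ((p ⟨0, hNpos⟩).subst σ1) (Term.var 0) := by
      refine toEqv2 ((P1 ⟨0, hNpos⟩).trans ?_)
      show (w ((⟨0, hNpos⟩ : Fin N) : ℕ)).1 = _
      rw [show ((⟨0, hNpos⟩ : Fin N) : ℕ) = 0 from rfl, hw0]
      rfl
    have key := eqv_realize L ![x, y] hEqv hM
    rw [Term.realize_subst, hσ1_def, realize_comp_cons] at key
    simpa using key
  · -- middle equations
    intro i h x y
    have hEqv : Eqv L E ((p i).subst σ2) ((p ⟨(i : ℕ) + 1, h⟩).subst σ1) := by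
      refine toEqv2 ((P2 i).trans ?_)
      rw [P1 ⟨(i : ℕ) + 1, h⟩]
    have key := eqv_realize L ![x, y] hEqv hM
    rw [Term.realize_subst, Term.realize_subst, hσ1_def, hσ2_def,
      realize_comp_cons, realize_comp_cons] at key
    simpa using key
  · -- last equation
    intro x y
    have hEqv : Eqv L E ((p ⟨N - 1, Nat.sub_lt hNpos one_pos⟩).subst σ2) (Term.var 1) := by
      refine toEqv2 ((P2 ⟨N - 1, Nat.sub_lt hNpos one_pos⟩).trans ?_)
      show (w (((⟨N - 1, Nat.sub_lt hNpos one_pos⟩ : Fin N) : ℕ) + 1)).1 = _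
      rw [show ((⟨N - 1, Nat.sub_lt hNpos one_pos⟩ : Fin N) : ℕ) + 1 = N from by
        show N - 1 + 1 = N; omega, hwN]
      rfl
    have key := eqv_realize L ![x, y] hEqv hM
    rw [Term.realize_subst, hσ2_def, realize_comp_cons] at key
    simpa using key
  · -- z equation
    intro i a
    have hEqv : Eqv L E ((p i).subst σ3) (Term.var 0) := by
      refine toEqv1 ((PB i).trans ?_)
      rw [hsec (i : ℕ) (le_of_lt i.isLt)]
      rfl
    have key := eqv_realize L ![a] hEqv hM
    rw [Term.realize_subst, hσ3_def, realize_comp_cons, realize_zterm] at key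
    simpa using key
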